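/- Let n ≥ 1. If C is an n×n random real matrix whose diagonal entries are all fixed equal to 1 and whose off-diagonal entries are independent, each distributed according to a Borel probability measure on ℝ that is atomless off 0, then P(det C = 1) = P(per C̃ = 1), where C̃ is the indicator matrix of C. -/

import Mathlib

open MeasureTheory

/-- The indicator matrix of a real matrix: entry `1` where the entry is nonzero, `0` where
the entry is `0`. -/
noncomputable def indicatorMatrix {n : ℕ} (A : Matrix (Fin n) (Fin n) ℝ) :
    Matrix (Fin n) (Fin n) ℝ :=
  Matrix.of fun i j => if A i j = 0 then 0 else 1

lemma measurable_eval_mvpoly {ι : Type*} (p : MvPolynomial ι ℝ) :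
    Measurable fun x : ι → ℝ => MvPolynomial.eval x p := by
  induction p using MvPolynomial.induction_on with
  | C a => simp only [MvPolynomial.eval_C]; exact measurable_const
  | add p q hp hq => simp only [map_add]; exact hp.add hq
  | mul_X p i hp => simp only [map_mul, MvPolynomial.eval_X]; exact hp.mul (measurable_pi_apply i)

lemma mvpoly_zero_null_fin : ∀ (k : ℕ) (ν : Fin k → Measure ℝ),
    (∀ i, IsFiniteMeasure (ν i)) → (∀ i, NoAtoms (ν i)) →
    ∀ p : MvPolynomial (Fin k) ℝ, p ≠ 0 →
    Measure.pi ν {x | MvPolynomial.eval x p = 0} = 0 := by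
  intro k
  induction k with
  | zero =>
    intro ν _ _ p hp
    obtain ⟨c, rfl⟩ := MvPolynomial.C_surjective (Fin 0) p
    have hc : c ≠ 0 := fun h => hp (by rw [h, map_zero])
    have h0 : {x : Fin 0 → ℝ | MvPolynomial.eval x (MvPolynomial.C c) = 0} = ∅ := by
      ext x; simp [hc]
    rw [h0]; exact measure_empty
  | succ k ih =>
    intro ν hfin hna p hp
    haveI := hfin; haveI := hna
    set q : Polynomial (MvPolynomial (Fin k) ℝ) := MvPolynomial.finSuccEquiv ℝ k p with hqdef
    have hq : q ≠ 0 := by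
      intro h
      exact hp ((MvPolynomial.finSuccEquiv ℝ k).injective (by rw [← hqdef, h, map_zero]))
    have hc0 : q.coeff q.natDegree ≠ 0 := by
      rw [← Polynomial.leadingCoeff]; exact Polynomial.leadingCoeff_ne_zero.mpr hq
    have hsuc : (fun j : Fin k => ν ((0 : Fin (k+1)).succAbove j)) = fun j => ν j.succ := by
      funext j; rw [Fin.succAbove_zero]
    -- the bad set of tails
    have hbad : Measure.pi (fun j : Fin k => ν j.succ)
        {y | MvPolynomial.eval y (q.coeff q.natDegree) = 0} = 0 :=
      ih _ (fun i => hfin _) (fun i => hna _) _ hc0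
    have hcons : Measurable fun z : ℝ × (Fin k → ℝ) => (Fin.cons z.1 z.2 : Fin (k+1) → ℝ) := by
      rw [measurable_pi_iff]; intro j
      refine Fin.cases ?_ ?_ j
      · simpa using measurable_fst
      · intro i; simp only [Fin.cons_succ]; exact (measurable_pi_apply i).comp measurable_snd
    set W : Set (ℝ × (Fin k → ℝ)) :=
      {z | MvPolynomial.eval (Fin.cons z.1 z.2 : Fin (k+1) → ℝ) p = 0} with hWdef
    have hWm : MeasurableSet W :=
      (measurable_eval_mvpoly p).comp hcons (measurableSet_singleton 0)
    have MP := measurePreserving_piFinSuccAbove ν 0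
    have hpre : {x : Fin (k+1) → ℝ | MvPolynomial.eval x p = 0}
        = (MeasurableEquiv.piFinSuccAbove (fun _ => ℝ) 0) ⁻¹' W := by
      ext x
      have hx : (Fin.cons ((MeasurableEquiv.piFinSuccAbove (fun _ : Fin (k+1) => ℝ) 0) x).1
          ((MeasurableEquiv.piFinSuccAbove (fun _ : Fin (k+1) => ℝ) 0) x).2 : Fin (k+1) → ℝ) = x := by
        funext j
        refine Fin.cases ?_ ?_ j
        · simp [MeasurableEquiv.piFinSuccAbove]
        · intro i
          simp [MeasurableEquiv.piFinSuccAbove, Fin.succAbove_zero, Fin.tail]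
      simp only [Set.mem_preimage, Set.mem_setOf_eq, hWdef, hx]
    rw [hpre, MP.measure_preimage hWm.nullMeasurableSet]
    rw [Measure.prod_apply_symm hWm]
    have hae : ∀ᵐ y ∂(Measure.pi fun j : Fin k => ν ((0 : Fin (k+1)).succAbove j)),
        MvPolynomial.eval y (q.coeff q.natDegree) ≠ 0 := by
      rw [hsuc, ae_iff]
      refine measure_mono_null ?_ hbad
      intro y hy; simpa using hy
    have hz : (fun y => (ν 0) ((fun t => (t, y)) ⁻¹' W))
        =ᵐ[Measure.pi fun j : Fin k => ν ((0 : Fin (k+1)).succAbove j)] 0 := by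
      refine hae.mono fun y hy => ?_
      have hqy : (Polynomial.map (MvPolynomial.eval y) q) ≠ 0 := by
        intro h
        apply hy
        rw [← Polynomial.coeff_map, h, Polynomial.coeff_zero]
      have hslice : ((fun t => (t, y)) ⁻¹' W)
          ⊆ {t : ℝ | (Polynomial.map (MvPolynomial.eval y) q).IsRoot t} := by
        intro t ht
        simp only [hWdef, Set.mem_preimage, Set.mem_setOf_eq] at ht
        rw [MvPolynomial.eval_eq_eval_mv_eval'] at ht
        exact ht
      simp only [Pi.zero_apply]
      haveI : NullSingletonClass (ν 0) := hna 0
      exact measure_mono_null hslice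
        ((Polynomial.finite_setOf_isRoot hqy).measure_zero _)
    rw [lintegral_congr_ae hz]; simp

lemma mvpoly_zero_null {ι : Type*} [Fintype ι] (ν : ι → Measure ℝ)
    (hfin : ∀ i, IsFiniteMeasure (ν i)) (hna : ∀ i, NoAtoms (ν i))
    (p : MvPolynomial ι ℝ) (hp : p ≠ 0) :
    Measure.pi ν {x | MvPolynomial.eval x p = 0} = 0 := by
  classical
  haveI := hfin
  let e : Fin (Fintype.card ι) ≃ ι := (Fintype.equivFin ι).symm
  have MP := measurePreserving_piCongrLeft ν e
  have hmeas : MeasurableSet {x : ι → ℝ | MvPolynomial.eval x p = 0} :=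
    measurable_eval_mvpoly p (measurableSet_singleton 0)
  rw [← MP.measure_preimage hmeas.nullMeasurableSet]
  have hp' : MvPolynomial.rename e.symm p ≠ 0 := by
    intro h
    exact hp (MvPolynomial.rename_injective _ e.symm.injective (by rw [h, map_zero]))
  have hpre : (MeasurableEquiv.piCongrLeft (fun _ : ι => ℝ) e) ⁻¹'
        {x : ι → ℝ | MvPolynomial.eval x p = 0}
      = {x' : Fin (Fintype.card ι) → ℝ |
          MvPolynomial.eval x' (MvPolynomial.rename e.symm p) = 0} := by
    ext x'
    have hx : (MeasurableEquiv.piCongrLeft (fun _ : ι => ℝ) e) x'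
        = fun i => x' (e.symm i) := by
      funext i
      conv_lhs => rw [← e.apply_symm_apply i]
      rw [MeasurableEquiv.coe_piCongrLeft, Equiv.piCongrLeft_apply_apply]
    simp only [Set.mem_preimage, Set.mem_setOf_eq, hx, MvPolynomial.eval_rename]
    rfl
  rw [hpre]
  exact mvpoly_zero_null_fin _ _ (fun i => hfin _) (fun i => hna _) _ hp'


lemma pi_decompose {ι : Type*} [Fintype ι] [DecidableEq ι] (κ ν : ι → Measure ℝ)
    (hκ : ∀ i, IsFiniteMeasure (κ i)) (hν : ∀ i, IsFiniteMeasure (ν i)) :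
    Measure.pi (fun i => κ i + ν i)
      = ∑ S : Finset ι, Measure.pi (fun i => if i ∈ S then κ i else ν i) := by
  classical
  haveI := hκ; haveI := hν
  haveI h1 : ∀ (S : Finset ι) (i : ι), SigmaFinite (if i ∈ S then κ i else ν i) := by
    intro S i; split <;> infer_instance
  refine Measure.pi_eq (fun s hs => ?_)
  rw [Measure.finset_sum_apply]
  have hbox : ∀ S : Finset ι,
      Measure.pi (fun i => if i ∈ S then κ i else ν i) (Set.pi Set.univ s)
        = ∏ i, (if i ∈ S then κ i (s i) else ν i (s i)) := by
    intro S
    rw [Measure.pi_pi]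
    exact Finset.prod_congr rfl fun i _ => by split <;> rfl
  simp_rw [hbox]
  have : ∀ i, (κ i + ν i) (s i) = κ i (s i) + ν i (s i) := fun i => rfl
  simp_rw [this, Finset.prod_add, Finset.powerset_univ]
  refine Finset.sum_congr rfl fun S _ => ?_
  rw [Finset.prod_ite]
  congr 1
  · apply Finset.prod_congr _ (fun _ _ => rfl)
    rw [Finset.filter_mem_eq_inter, Finset.univ_inter]
  · apply Finset.prod_congr _ (fun _ _ => rfl)
    rw [Finset.filter_not, Finset.filter_mem_eq_inter, Finset.univ_inter]

lemma map_curry_pi {n : ℕ} (μ : Fin n → Fin n → Measure ℝ)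
    [∀ i j, IsProbabilityMeasure (μ i j)] :
    Measure.pi (fun i => Measure.pi (fun j => μ i j)) =
      (Measure.pi (fun p : Fin n × Fin n => μ p.1 p.2)).map
        (fun g (i j : Fin n) => g (i, j)) := by
  have hc : Measurable (fun (g : Fin n × Fin n → ℝ) (i j : Fin n) => g (i, j)) :=
    measurable_pi_lambda _ fun i => measurable_pi_lambda _ fun j => measurable_pi_apply (i, j)
  refine Measure.pi_eq_generateFrom (fun i => generateFrom_pi) (fun i => isPiSystem_pi)
    (fun i => ?_) (fun s hs => ?_)
  · refine ⟨fun _ => Set.univ, fun _ => ⟨fun _ => Set.univ, ?_, Set.pi_univ _⟩,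
      fun _ => measure_lt_top _ _, Set.iUnion_const _⟩
    intro j _
    simp only [Set.mem_setOf_eq]
    exact MeasurableSet.univ
  · choose t ht hteq using hs
    have htm : ∀ i, MeasurableSet (s i) := by
      intro i
      rw [← hteq i]
      exact MeasurableSet.pi Set.countable_univ fun j _ => ht i j (Set.mem_univ j)
    rw [Measure.map_apply hc (MeasurableSet.pi Set.countable_univ fun i _ => htm i)]
    have hpre : (fun (g : Fin n × Fin n → ℝ) (i j : Fin n) => g (i, j)) ⁻¹'
          (Set.pi Set.univ s)
        = Set.pi Set.univ (fun p : Fin n × Fin n => t p.1 p.2) := by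
      ext g
      simp only [Set.mem_preimage, Set.mem_univ_pi]
      constructor
      · intro h p
        have := h p.1
        rw [← hteq p.1] at this
        exact this p.2 (Set.mem_univ _)
      · intro h i
        rw [← hteq i]
        intro j _
        exact h (i, j)
    rw [hpre, Measure.pi_pi, Fintype.prod_prod_type]
    refine Finset.prod_congr rfl fun i _ => ?_
    rw [← hteq i, Measure.pi_pi]


lemma prod_monomial_one {α σ' : Type*} (s : Finset α) (f : α → (σ' →₀ ℕ)) :
    ∏ a ∈ s, MvPolynomial.monomial (f a) (1:ℝ) = MvPolynomial.monomial (∑ a ∈ s, f a) 1 := by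
  classical
  induction s using Finset.cons_induction with
  | empty => simp [MvPolynomial.monomial_zero']
  | cons a s ha ih =>
    rw [Finset.prod_cons, Finset.sum_cons, ih, MvPolynomial.monomial_mul, one_mul]

lemma pattern_step (n : ℕ) (μ : Fin n → Fin n → Measure ℝ)
    [∀ i j, IsProbabilityMeasure (μ i j)]
    (hfixed : ∀ i, μ i i = Measure.dirac 1)
    (hatomless : ∀ i j, i ≠ j → ∀ x : ℝ, x ≠ 0 → μ i j {x} = 0)
    (S : Finset (Fin n × Fin n)) :
    Measure.pi (fun p : Fin n × Fin n =>
        if p ∈ S then (μ p.1 p.2).restrict {(0:ℝ)}ᶜ else (μ p.1 p.2).restrict {0})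
        {g : Fin n × Fin n → ℝ | (Matrix.of fun i j => g (i, j)).det = 1}
      = Measure.pi (fun p : Fin n × Fin n =>
        if p ∈ S then (μ p.1 p.2).restrict {(0:ℝ)}ᶜ else (μ p.1 p.2).restrict {0})
        {g : Fin n × Fin n → ℝ |
          (indicatorMatrix (Matrix.of fun i j => g (i, j))).permanent = 1} := by
  classical
  set ρ : Fin n × Fin n → Measure ℝ := fun p =>
    if p ∈ S then (μ p.1 p.2).restrict {(0:ℝ)}ᶜ else (μ p.1 p.2).restrict {0} with hρdef
  have hρfin : ∀ p, IsFiniteMeasure (ρ p) := by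
    intro p; rw [hρdef]; dsimp only; split <;> infer_instance
  haveI := hρfin
  haveI : ∀ p, SigmaFinite (ρ p) := fun p => inferInstance
  by_cases hdiag : ∀ i : Fin n, (i, i) ∈ S
  case neg =>
    push_neg at hdiag
    obtain ⟨i, hi⟩ := hdiag
    have h0 : Measure.pi ρ Set.univ = 0 := by
      rw [Measure.pi_univ]
      refine Finset.prod_eq_zero (Finset.mem_univ (i, i)) ?_
      have hx : ρ (i, i) = (μ i i).restrict {0} := by rw [hρdef]; simp [hi]
      rw [hx, Measure.restrict_apply_univ, hfixed i,
        Measure.dirac_apply' _ (measurableSet_singleton 0)]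
      simp
    have hz : ∀ t : Set (Fin n × Fin n → ℝ), Measure.pi ρ t = 0 := fun t =>
      le_antisymm (h0 ▸ measure_mono (Set.subset_univ t)) zero_le
    rw [hz, hz]
  case pos =>
  set G : Set (Fin n × Fin n → ℝ) := {g | ∀ p : Fin n × Fin n,
      (p.1 = p.2 → g p = 1) ∧
      (p.1 ≠ p.2 → ((p ∈ S → g p ≠ 0) ∧ (p ∉ S → g p = 0)))} with hGdef
  -- complement of the good event is null
  have hGc : Measure.pi ρ Gᶜ = 0 := by
    have hsub : Gᶜ ⊆ ⋃ p : Fin n × Fin n, (Function.eval p) ⁻¹'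
        {t : ℝ | ¬((p.1 = p.2 → t = 1) ∧
          (p.1 ≠ p.2 → ((p ∈ S → t ≠ 0) ∧ (p ∉ S → t = 0))))} := by
      intro g hg
      simp only [hGdef, Set.mem_compl_iff, Set.mem_setOf_eq, not_forall] at hg
      obtain ⟨p, hp⟩ := hg
      exact Set.mem_iUnion.mpr ⟨p, hp⟩
    refine measure_mono_null hsub
      (measure_iUnion_null fun p => Measure.pi_eval_preimage_null _ ?_)
    by_cases hd : p.1 = p.2
    · have hin : p ∈ S := by
        have h2 : ((p.1, p.1) : Fin n × Fin n) = p := Prod.ext_iff.mpr ⟨rfl, hd⟩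
        rw [← h2]; exact hdiag p.1
      have hρp : ρ p = (μ p.1 p.2).restrict {(0:ℝ)}ᶜ := by rw [hρdef]; simp [hin]
      have hμp : μ p.1 p.2 = Measure.dirac 1 := by
        have h3 : μ p.1 p.2 = μ p.1 p.1 := by rw [← hd]
        rw [h3]; exact hfixed p.1
      have hsub2 : {t : ℝ | ¬((p.1 = p.2 → t = 1) ∧
          (p.1 ≠ p.2 → ((p ∈ S → t ≠ 0) ∧ (p ∉ S → t = 0))))} ⊆ {(1:ℝ)}ᶜ := by
        intro t ht
        simp only [Set.mem_setOf_eq] at ht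
        intro h1
        simp only [Set.mem_singleton_iff] at h1
        exact ht ⟨fun _ => h1, fun h => absurd hd h⟩
      refine measure_mono_null hsub2 ?_
      rw [hρp, hμp, Measure.restrict_apply (measurableSet_singleton 1).compl,
        Measure.dirac_apply' _ (((measurableSet_singleton 1).compl).inter
          (measurableSet_singleton 0).compl)]
      simp
    · by_cases hs : p ∈ S
      · have hρp : ρ p = (μ p.1 p.2).restrict {(0:ℝ)}ᶜ := by rw [hρdef]; simp [hs]
        have hsub2 : {t : ℝ | ¬((p.1 = p.2 → t = 1) ∧
            (p.1 ≠ p.2 → ((p ∈ S → t ≠ 0) ∧ (p ∉ S → t = 0))))} ⊆ {(0:ℝ)} := by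
          intro t ht
          simp only [Set.mem_setOf_eq] at ht
          by_contra h0
          simp only [Set.mem_singleton_iff] at h0
          exact ht ⟨fun h => absurd h hd, fun _ => ⟨fun _ => h0, fun h' => absurd hs h'⟩⟩
        refine measure_mono_null hsub2 ?_
        rw [hρp, Measure.restrict_apply (measurableSet_singleton 0)]
        rw [Set.inter_compl_self]
        exact measure_empty
      · have hρp : ρ p = (μ p.1 p.2).restrict {(0:ℝ)} := by rw [hρdef]; simp [hs]
        have hsub2 : {t : ℝ | ¬((p.1 = p.2 → t = 1) ∧
            (p.1 ≠ p.2 → ((p ∈ S → t ≠ 0) ∧ (p ∉ S → t = 0))))} ⊆ {(0:ℝ)}ᶜ := by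
          intro t ht
          simp only [Set.mem_setOf_eq] at ht
          intro h0
          simp only [Set.mem_singleton_iff] at h0
          exact ht ⟨fun h => absurd h hd, fun _ => ⟨fun h' => absurd h' hs, fun _ => h0⟩⟩
        refine measure_mono_null hsub2 ?_
        rw [hρp, Measure.restrict_apply (measurableSet_singleton 0).compl]
        rw [Set.compl_inter_self]
        exact measure_empty
  have gdiag : ∀ g ∈ G, ∀ i : Fin n, g (i, i) = 1 := fun g hg i => (hg (i, i)).1 rfl
  have gS : ∀ g ∈ G, ∀ p : Fin n × Fin n, p.1 ≠ p.2 → p ∈ S → g p ≠ 0 :=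
    fun g hg p h1 h2 => ((hg p).2 h1).1 h2
  have gnS : ∀ g ∈ G, ∀ p : Fin n × Fin n, p.1 ≠ p.2 → p ∉ S → g p = 0 :=
    fun g hg p h1 h2 => ((hg p).2 h1).2 h2
  by_cases hperm : ∃ σ : Equiv.Perm (Fin n), σ ≠ 1 ∧ ∀ i, σ i ≠ i → (σ i, i) ∈ S
  case neg =>
    push_neg at hperm
    have hdet1 : ∀ g ∈ G, (Matrix.of fun i j => g (i, j)).det = 1 := by
      intro g hg
      rw [Matrix.det_apply', Finset.sum_eq_single (1 : Equiv.Perm (Fin n))]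
      · have he : ∀ i : Fin n,
            (Matrix.of fun i j => g (i, j)) ((1 : Equiv.Perm (Fin n)) i) i = 1 := by
          intro i
          simp only [Matrix.of_apply, Equiv.Perm.one_apply]
          exact gdiag g hg i
        rw [Finset.prod_congr rfl (fun i _ => he i), Finset.prod_const_one, mul_one]
        simp
      · intro τ _ hτ
        obtain ⟨i, hne, hnotin⟩ := hperm τ hτ
        rw [Finset.prod_eq_zero (Finset.mem_univ i), mul_zero]
        simp only [Matrix.of_apply]
        exact gnS g hg (τ i, i) hne hnotin
      · intro h; exact absurd (Finset.mem_univ _) h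
    have hper1 : ∀ g ∈ G, (indicatorMatrix (Matrix.of fun i j => g (i, j))).permanent = 1 := by
      intro g hg
      rw [Matrix.permanent, Finset.sum_eq_single (1 : Equiv.Perm (Fin n))]
      · refine Finset.prod_eq_one fun i _ => ?_
        simp only [indicatorMatrix, Matrix.of_apply, Equiv.Perm.one_apply]
        refine if_neg ?_
        rw [gdiag g hg i]
        exact one_ne_zero
      · intro τ _ hτ
        obtain ⟨i, hne, hnotin⟩ := hperm τ hτ
        refine Finset.prod_eq_zero (Finset.mem_univ i) ?_
        simp only [indicatorMatrix, Matrix.of_apply]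
        exact if_pos (gnS g hg (τ i, i) hne hnotin)
      · intro h; exact absurd (Finset.mem_univ _) h
    have key : ∀ t : Set (Fin n × Fin n → ℝ), G ⊆ t →
        Measure.pi ρ t = Measure.pi ρ Set.univ := by
      intro t ht
      refine le_antisymm (measure_mono (Set.subset_univ t)) ?_
      have htc : Measure.pi ρ tᶜ = 0 :=
        measure_mono_null (Set.compl_subset_compl.mpr ht) hGc
      calc Measure.pi ρ Set.univ = Measure.pi ρ (t ∪ tᶜ) := by rw [Set.union_compl_self]
        _ ≤ Measure.pi ρ t + Measure.pi ρ tᶜ := measure_union_le _ _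
        _ = Measure.pi ρ t := by rw [htc, add_zero]
    rw [key {g : Fin n × Fin n → ℝ | (Matrix.of fun i j => g (i, j)).det = 1}
      (fun g hg => hdet1 g hg),
      key {g : Fin n × Fin n → ℝ |
        (indicatorMatrix (Matrix.of fun i j => g (i, j))).permanent = 1}
      (fun g hg => hper1 g hg)]
  case pos =>
  obtain ⟨σ, hσ1, hσS⟩ := hperm
  -- the permanent is ≥ 2 on G, hence never 1
  have hper0 : Measure.pi ρ
      {g : Fin n × Fin n → ℝ |
        (indicatorMatrix (Matrix.of fun i j => g (i, j))).permanent = 1} = 0 := by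
    refine measure_mono_null (fun g hg => ?_) hGc
    simp only [Set.mem_setOf_eq] at hg
    simp only [Set.mem_compl_iff]
    intro hgG
    have hperEq : (indicatorMatrix (Matrix.of fun i j => g (i, j))).permanent
        = ∑ τ : Equiv.Perm (Fin n), ∏ i, (if g (τ i, i) = 0 then (0:ℝ) else 1) := by
      rw [Matrix.permanent]
      refine Finset.sum_congr rfl fun τ _ => Finset.prod_congr rfl fun i _ => ?_
      simp [indicatorMatrix]
      exact if_congr Iff.rfl rfl rfl
    have hterm : ∀ τ : Equiv.Perm (Fin n),
        (0:ℝ) ≤ ∏ i, (if g (τ i, i) = 0 then (0:ℝ) else 1) :=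
      fun τ => Finset.prod_nonneg fun i _ => by split <;> norm_num
    have h1t : ∏ i, (if g ((1 : Equiv.Perm (Fin n)) i, i) = 0 then (0:ℝ) else 1) = 1 := by
      refine Finset.prod_eq_one fun i _ => ?_
      rw [Equiv.Perm.one_apply, if_neg]
      rw [gdiag g hgG i]; exact one_ne_zero
    have hσt : ∏ i, (if g (σ i, i) = 0 then (0:ℝ) else 1) = 1 := by
      refine Finset.prod_eq_one fun i _ => ?_
      by_cases hι : σ i = i
      · rw [if_neg]; rw [hι, gdiag g hgG i]; exact one_ne_zero
      · rw [if_neg (gS g hgG (σ i, i) hι (hσS i hι))]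
    have hge : (1:ℝ) + 1 ≤ ∑ τ : Equiv.Perm (Fin n),
        ∏ i, (if g (τ i, i) = 0 then (0:ℝ) else 1) := by
      have hsum : ∑ τ ∈ ({1, σ} : Finset (Equiv.Perm (Fin n))),
          ∏ i, (if g (τ i, i) = 0 then (0:ℝ) else 1) = 1 + 1 := by
        rw [Finset.sum_pair (Ne.symm hσ1), h1t, hσt]
      rw [← hsum]
      exact Finset.sum_le_sum_of_subset_of_nonneg (Finset.subset_univ _)
        (fun τ _ _ => hterm τ)
    rw [hperEq] at hg
    rw [hg] at hge
    linarith
  -- the polynomial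
  set Pp : Fin n × Fin n → Prop := fun p => p.1 ≠ p.2 ∧ p ∈ S with hPdef
  set ent : Equiv.Perm (Fin n) → Fin n → MvPolynomial {p // Pp p} ℝ := fun τ i =>
    if h1 : τ i = i then 1
    else if h2 : (τ i, i) ∈ S then MvPolynomial.X ⟨(τ i, i), ⟨h1, h2⟩⟩ else 0 with hentdef
  set pS : MvPolynomial {p // Pp p} ℝ :=
    ∑ τ : Equiv.Perm (Fin n), MvPolynomial.C ((Equiv.Perm.sign τ : ℤ) : ℝ) * ∏ i, ent τ i
    with hpSdef
  set dd : Equiv.Perm (Fin n) → ({p // Pp p} →₀ ℕ) := fun τ =>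
    ∑ i, if h1 : τ i = i then 0
      else if h2 : (τ i, i) ∈ S then Finsupp.single ⟨(τ i, i), ⟨h1, h2⟩⟩ 1 else 0 with hdddef
  have hval : ∀ (τ : Equiv.Perm (Fin n)) (u : {p // Pp p}),
      dd τ u = if τ u.1.2 = u.1.1 then 1 else 0 := by
    intro τ u
    rw [hdddef]
    dsimp only
    rw [Finsupp.finset_sum_apply, Finset.sum_eq_single u.1.2]
    · by_cases h1 : τ u.1.2 = u.1.2
      · rw [dif_pos h1]
        have hne : τ u.1.2 ≠ u.1.1 := by rw [h1]; exact fun h => u.2.1 h.symm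
        rw [if_neg hne]
        simp
      · rw [dif_neg h1]
        by_cases h2 : (τ u.1.2, u.1.2) ∈ S
        · rw [dif_pos h2, Finsupp.single_apply]
          by_cases h3 : τ u.1.2 = u.1.1
          · have hEq : (⟨(τ u.1.2, u.1.2), ⟨h1, h2⟩⟩ : {p // Pp p}) = u :=
              Subtype.ext (Prod.ext_iff.mpr ⟨h3, rfl⟩)
            rw [if_pos h3, if_pos hEq]
          · rw [if_neg h3, if_neg]
            intro h
            exact h3 (congrArg (fun v : {p // Pp p} => v.1.1) h)
        · rw [dif_neg h2]
          have h3 : τ u.1.2 ≠ u.1.1 := by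
            intro h
            exact h2 (by rw [show ((τ u.1.2, u.1.2) : Fin n × Fin n) = u.1 from
              Prod.ext_iff.mpr ⟨h, rfl⟩]; exact u.2.2)
          rw [if_neg h3]
          simp
    · intro i _ hne
      by_cases h1 : τ i = i
      · rw [dif_pos h1]; simp
      · rw [dif_neg h1]
        by_cases h2 : (τ i, i) ∈ S
        · rw [dif_pos h2, Finsupp.single_apply, if_neg]
          intro h
          exact hne (congrArg (fun v : {p // Pp p} => v.1.2) h)
        · rw [dif_neg h2]; simp
    · intro h; exact absurd (Finset.mem_univ _) h
  have hval' : ∀ (τ : Equiv.Perm (Fin n)) (a b : Fin n) (hq : Pp (a, b)),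
      dd τ ⟨(a, b), hq⟩ = if τ b = a then 1 else 0 := fun τ a b hq => hval τ ⟨(a, b), hq⟩
  obtain ⟨i0, hi0⟩ : ∃ i0, σ i0 ≠ i0 := by
    by_contra h; push_neg at h
    exact hσ1 (Equiv.ext fun x => by rw [h x]; rfl)
  have hdne : dd σ ≠ 0 := by
    intro h
    have hv := hval' σ (σ i0) i0 ⟨hi0, hσS i0 hi0⟩
    rw [h, if_pos rfl] at hv
    simp at hv
  have hprodmono : ∀ (τ : Equiv.Perm (Fin n)), (∀ i, τ i ≠ i → (τ i, i) ∈ S) →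
      ∏ i, ent τ i = MvPolynomial.monomial (dd τ) 1 := by
    intro τ hτ
    have he : ∀ i : Fin n, ent τ i = MvPolynomial.monomial
        (if h1 : τ i = i then 0
         else if h2 : (τ i, i) ∈ S then Finsupp.single ⟨(τ i, i), ⟨h1, h2⟩⟩ 1 else 0) 1 := by
      intro i
      rw [hentdef]
      dsimp only
      by_cases h1 : τ i = i
      · rw [dif_pos h1, dif_pos h1]
        rw [MvPolynomial.monomial_zero', map_one]
      · have h2 : (τ i, i) ∈ S := hτ i h1
        rw [dif_neg h1, dif_neg h1, dif_pos h2, dif_pos h2]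
        rfl
    rw [Finset.prod_congr rfl (fun i _ => he i), prod_monomial_one, hdddef]
  have hcoeff : MvPolynomial.coeff (dd σ) (pS - 1) = ((Equiv.Perm.sign σ : ℤ) : ℝ) := by
    rw [MvPolynomial.coeff_sub]
    have h1 : MvPolynomial.coeff (dd σ) (1 : MvPolynomial {p // Pp p} ℝ) = 0 := by
      rw [MvPolynomial.coeff_one, if_neg]
      exact fun h => hdne h.symm
    rw [h1, sub_zero, hpSdef, MvPolynomial.coeff_sum, Finset.sum_eq_single σ]
    · rw [MvPolynomial.coeff_C_mul, hprodmono σ hσS, MvPolynomial.coeff_monomial,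
        if_pos rfl, mul_one]
    · intro τ _ hτσ
      rw [MvPolynomial.coeff_C_mul]
      by_cases hgood : ∀ i, τ i ≠ i → (τ i, i) ∈ S
      · rw [hprodmono τ hgood, MvPolynomial.coeff_monomial, if_neg, mul_zero]
        intro heq
        apply hτσ
        apply Equiv.ext
        intro i
        by_cases hσi : σ i = i
        · by_cases hτi : τ i = i
          · rw [hτi, hσi]
          · exfalso
            have hu1 := hval' τ (τ i) i ⟨hτi, hgood i hτi⟩
            have hu2 := hval' σ (τ i) i ⟨hτi, hgood i hτi⟩
            rw [heq, hu2] at hu1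
            rw [if_pos rfl] at hu1
            have hne2 : σ i ≠ τ i := by rw [hσi]; exact fun h => hτi h.symm
            rw [if_neg hne2] at hu1
            exact one_ne_zero hu1.symm
        · have hu1 := hval' τ (σ i) i ⟨hσi, hσS i hσi⟩
          have hu2 := hval' σ (σ i) i ⟨hσi, hσS i hσi⟩
          rw [heq, hu2, if_pos rfl] at hu1
          by_contra hne3
          rw [if_neg hne3] at hu1
          exact one_ne_zero hu1
      · push_neg at hgood
        obtain ⟨i, hne, hnotin⟩ := hgood
        rw [Finset.prod_eq_zero (Finset.mem_univ i), MvPolynomial.coeff_zero, mul_zero]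
        rw [hentdef]
        dsimp only
        rw [dif_neg hne, dif_neg hnotin]
    · intro h; exact absurd (Finset.mem_univ _) h
  have hsgn : ((Equiv.Perm.sign σ : ℤ) : ℝ) ≠ 0 := by
    have : ((Equiv.Perm.sign σ : ℤ)) ≠ 0 := Units.ne_zero _
    exact_mod_cast this
  have hpS1 : pS - 1 ≠ 0 := by
    intro h
    rw [h, MvPolynomial.coeff_zero] at hcoeff
    exact hsgn hcoeff.symm
  -- det = eval pS on G
  have hdetG : ∀ g ∈ G, (Matrix.of fun i j => g (i, j)).det
      = MvPolynomial.eval (fun u : {p // Pp p} => g u.1) pS := by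
    intro g hg
    rw [Matrix.det_apply', hpSdef, map_sum]
    refine Finset.sum_congr rfl fun τ _ => ?_
    rw [map_mul, MvPolynomial.eval_C, map_prod]
    congr 1
    refine Finset.prod_congr rfl fun i _ => ?_
    rw [hentdef]
    dsimp only
    simp only [Matrix.of_apply]
    by_cases h1 : τ i = i
    · rw [dif_pos h1, map_one, h1]
      exact gdiag g hg i
    · rw [dif_neg h1]
      by_cases h2 : (τ i, i) ∈ S
      · rw [dif_pos h2, MvPolynomial.eval_X]
      · rw [dif_neg h2, map_zero]
        exact gnS g hg (τ i, i) h1 h2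
  -- the zero set of the polynomial is null
  have hNA : ∀ u : {p // Pp p}, NoAtoms (ρ u.1) := by
    intro u
    constructor
    intro x
    have hρu : ρ u.1 = (μ u.1.1 u.1.2).restrict {(0:ℝ)}ᶜ := by rw [hρdef]; simp [u.2.2]
    rw [hρu, Measure.restrict_apply (measurableSet_singleton x)]
    by_cases hx : x = 0
    · subst hx; rw [Set.inter_compl_self]; exact measure_empty
    · have hxx : ({x} : Set ℝ) ∩ {(0:ℝ)}ᶜ = {x} := by
        apply Set.inter_eq_self_of_subset_left
        simpa using Ne.symm hx
      rw [hxx]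
      exact hatomless u.1.1 u.1.2 u.2.1 x hx
  have hZ0 : Measure.pi ρ
      {g : Fin n × Fin n → ℝ |
        MvPolynomial.eval (fun u : {p // Pp p} => g u.1) (pS - 1) = 0} = 0 := by
    have hsplit := measurePreserving_piEquivPiSubtypeProd
      (α := fun _ : Fin n × Fin n => ℝ) ρ Pp
    have hAm : MeasurableSet {y : {p // Pp p} → ℝ | MvPolynomial.eval y (pS - 1) = 0} :=
      measurable_eval_mvpoly _ (measurableSet_singleton 0)
    have hpre : {g : Fin n × Fin n → ℝ |
        MvPolynomial.eval (fun u : {p // Pp p} => g u.1) (pS - 1) = 0}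
        = (MeasurableEquiv.piEquivPiSubtypeProd (fun _ : Fin n × Fin n => ℝ) Pp) ⁻¹'
          ({y : {p // Pp p} → ℝ | MvPolynomial.eval y (pS - 1) = 0} ×ˢ Set.univ) := by
      ext g
      simp only [Set.mem_preimage, Set.mem_prod, Set.mem_univ, and_true, Set.mem_setOf_eq,
        MeasurableEquiv.piEquivPiSubtypeProd, Equiv.piEquivPiSubtypeProd,
        MeasurableEquiv.coe_mk, Equiv.coe_fn_mk]
    rw [hpre, hsplit.measure_preimage (hAm.prod MeasurableSet.univ).nullMeasurableSet,
      Measure.prod_prod]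
    rw [mvpoly_zero_null _ (fun u => hρfin u.1) hNA _ hpS1, zero_mul]
  have hdet0 : Measure.pi ρ
      {g : Fin n × Fin n → ℝ | (Matrix.of fun i j => g (i, j)).det = 1} = 0 := by
    refine measure_mono_null (fun g hg => ?_) (measure_union_null hGc hZ0)
    simp only [Set.mem_setOf_eq] at hg
    by_cases hgG : g ∈ G
    · refine Or.inr ?_
      simp only [Set.mem_setOf_eq]
      rw [map_sub, map_one, ← hdetG g hgG, hg, sub_self]
    · exact Or.inl hgG
  rw [hdet0, hper0]


/-- For a random `n × n` real matrix of type `C_n` — all diagonal entries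
are (almost surely) fixed equal to `1`, and the off-diagonal entries are independent with
laws that are atomless off `0` — we have `P(det C = 1) = P(per C̃ = 1)`, where `C̃` is the
indicator matrix of `C`. -/
theorem typeC_prob_det_one_eq_prob_permanent_indicator_one
    (n : ℕ) (hn : 1 ≤ n)
    (μ : Fin n → Fin n → Measure ℝ)
    [∀ i j, IsProbabilityMeasure (μ i j)]
    (hfixed : ∀ i : Fin n, μ i i = Measure.dirac 1)
    (hatomless : ∀ i j : Fin n, i ≠ j → ∀ x : ℝ, x ≠ 0 → μ i j {x} = 0) :
    Measure.pi (fun i => Measure.pi (fun j => μ i j))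
        {C : Fin n → Fin n → ℝ | (Matrix.of C).det = 1}
      = Measure.pi (fun i => Measure.pi (fun j => μ i j))
        {C : Fin n → Fin n → ℝ | (indicatorMatrix (Matrix.of C)).permanent = 1} := by
  classical
  have hc : Measurable (fun (g : Fin n × Fin n → ℝ) (i j : Fin n) => g (i, j)) :=
    measurable_pi_lambda _ fun i => measurable_pi_lambda _ fun j => measurable_pi_apply (i, j)
  have hentry : ∀ a b : Fin n, Measurable fun C : Fin n → Fin n → ℝ => C a b :=
    fun a b => (measurable_pi_apply b).comp (measurable_pi_apply a)
  have hdetm : Measurable fun C : Fin n → Fin n → ℝ => (Matrix.of C).det := by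
    have hEq : (fun C : Fin n → Fin n → ℝ => (Matrix.of C).det)
        = fun C => ∑ σ : Equiv.Perm (Fin n),
            ((Equiv.Perm.sign σ : ℤ) : ℝ) * ∏ i, C (σ i) i := by
      funext C
      rw [Matrix.det_apply']
      rfl
    rw [hEq]
    exact Finset.measurable_sum _ fun σ _ =>
      (Finset.measurable_prod _ fun i _ => hentry (σ i) i).const_mul _
  have hperm' : Measurable fun C : Fin n → Fin n → ℝ =>
      (indicatorMatrix (Matrix.of C)).permanent := by
    have hEq : (fun C : Fin n → Fin n → ℝ => (indicatorMatrix (Matrix.of C)).permanent)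
        = fun C => ∑ σ : Equiv.Perm (Fin n),
            ∏ i, (if C (σ i) i = 0 then (0:ℝ) else 1) := by
      funext C
      rw [Matrix.permanent]
      rfl
    rw [hEq]
    exact Finset.measurable_sum _ fun σ _ => Finset.measurable_prod _ fun i _ =>
      Measurable.ite (hentry (σ i) i (measurableSet_singleton 0))
        measurable_const measurable_const
  have hdetMeas : MeasurableSet {C : Fin n → Fin n → ℝ | (Matrix.of C).det = 1} :=
    hdetm (measurableSet_singleton 1)
  have hperMeas : MeasurableSet
      {C : Fin n → Fin n → ℝ | (indicatorMatrix (Matrix.of C)).permanent = 1} :=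
    hperm' (measurableSet_singleton 1)
  rw [map_curry_pi μ, Measure.map_apply hc hdetMeas, Measure.map_apply hc hperMeas]
  have hm : (fun p : Fin n × Fin n => μ p.1 p.2)
      = fun p => (μ p.1 p.2).restrict {(0:ℝ)}ᶜ + (μ p.1 p.2).restrict {0} := by
    funext p
    rw [add_comm, Measure.restrict_add_restrict_compl (measurableSet_singleton 0)]
  rw [hm]
  rw [show Measure.pi (fun p : Fin n × Fin n =>
        (μ p.1 p.2).restrict {(0:ℝ)}ᶜ + (μ p.1 p.2).restrict {0})
      = ∑ S : Finset (Fin n × Fin n), Measure.pi (fun p : Fin n × Fin n =>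
          if p ∈ S then (μ p.1 p.2).restrict {(0:ℝ)}ᶜ else (μ p.1 p.2).restrict {0}) from
    pi_decompose _ _ (fun _ => inferInstance) (fun _ => inferInstance)]
  rw [Measure.finset_sum_apply, Measure.finset_sum_apply]
  exact Finset.sum_congr rfl fun S _ => pattern_step n μ hfixed hatomless S
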